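/- Let M be a subset of a real normed space X and S, T : X → X self-mappings such that u ∈ Fix(S) ∩ Fix(T) for some u ∈ X and T(∂M ∩ M) ⊆ M. Assume S(P_M(u)) = P_M(u), P_M(u) is closed and has a contractive jointly continuous family ℑ = {f_x : x ∈ P_M(u)} with contractiveness function Φ : (0,1) → (0,1), the pair (S,T) is a generalized JHℑ-suboperator pair with order n₀ on P_M(u), and for all x, y ∈ P_M(u) ∪ {u}: if y = u then ψ(∫₀^{‖Tx−Ty‖} φ(s)ds) ≤ F(ψ(∫₀^{‖Sx−Sy‖} φ(s)ds), φᵤ(∫₀^{‖Sx−Sy‖} φ(s)ds)), and if y ∈ P_M(u) then for each t ∈ (0,1), ψ(∫₀^{‖Tx−Ty‖} φ(s)ds) ≤ F(ψ(∫₀^{(1/Φ(t))γ(m₄(x,y))} φ(s)ds), φᵤ(∫₀^{(1/Φ(t))γ(m₄(x,y))} φ(s)ds)), where ψ is an altering distance function, φᵤ is an ultra altering distance function, F is a C-class function, and the triple (ψ, φᵤ, F) is monotone. Then P_M(u) is T-invariant; moreover, if cl(T(P_M(u))) is compact and S and T are continuous on P_M(u), then P_M(u) ∩ Fix(S) ∩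 Fix(T) ≠ ∅. -/

import Mathlib

open MeasureTheory Filter Topology Set

noncomputable section

/-- The integral `∫₀^a φ(t) dt`. -/
def intPhi (phi : ℝ → ℝ) (a : ℝ) : ℝ := ∫ t in (0:ℝ)..a, phi t

/-- `φ : [0,∞) → [0,∞)` is Lebesgue integrable, summable, nonnegative, with
`∫₀^ε φ(t)dt > 0` for all `ε > 0`. -/
def PhiAdmissible (phi : ℝ → ℝ) : Prop :=
  (∀ t ≥ (0:ℝ), 0 ≤ phi t) ∧ (∀ b : ℝ, IntervalIntegrable phi volume 0 b) ∧
  ∀ ε > (0:ℝ), 0 < intPhi phi ε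

/-- Altering distance function: nondecreasing, continuous, `ψ t = 0 ↔ t = 0` on `[0,∞)`. -/
def AlteringDistance (ψ : ℝ → ℝ) : Prop :=
  MonotoneOn ψ (Ici 0) ∧ ContinuousOn ψ (Ici 0) ∧ ∀ t ≥ (0:ℝ), (ψ t = 0 ↔ t = 0)

/-- Ultra altering distance function: continuous, nondecreasing, positive on `(0,∞)`,
nonnegative at `0`. -/
def UltraAltering (φu : ℝ → ℝ) : Prop :=
  ContinuousOn φu (Ici 0) ∧ MonotoneOn φu (Ici 0) ∧ (∀ t > (0:ℝ), 0 < φu t) ∧ 0 ≤ φu 0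

/-- C-class function: continuous on `[0,∞)²`, `F s t ≤ s`, and `F s t = s → s = 0 ∨ t = 0`. -/
def CClassFun (F : ℝ → ℝ → ℝ) : Prop :=
  ContinuousOn (Function.uncurry F) (Ici 0 ×ˢ Ici 0) ∧
  (∀ s ≥ (0:ℝ), ∀ t ≥ (0:ℝ), F s t ≤ s) ∧
  (∀ s ≥ (0:ℝ), ∀ t ≥ (0:ℝ), F s t = s → s = 0 ∨ t = 0)

/-- The triple `(ψ, φᵤ, F)` is monotone. -/
def MonotoneTriple (ψ φu : ℝ → ℝ) (F : ℝ → ℝ → ℝ) : Prop :=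
  ∀ x y : ℝ, 0 ≤ x → x ≤ y → F (ψ x) (φu x) ≤ F (ψ y) (φu y)

/-- The triple `(ψ, φᵤ, F)` is strictly monotone. -/
def StrictMonotoneTriple (ψ φu : ℝ → ℝ) (F : ℝ → ℝ → ℝ) : Prop :=
  ∀ x y : ℝ, 0 ≤ x → x < y → F (ψ x) (φu x) < F (ψ y) (φu y)

/-- `γ : (0,∞) → (0,∞)` is nondecreasing with `γ t < t` for all `t > 0`. -/
def GammaAdmissible (γ : ℝ → ℝ) : Prop :=
  (∀ t > (0:ℝ), 0 < γ t) ∧ MonotoneOn γ (Ioi 0) ∧ ∀ t > (0:ℝ), γ t < t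

variable {X : Type*} [NormedAddCommGroup X] [NormedSpace ℝ X]

/-- Fixed points of `T` lying in `M`. -/
def FixOn (T : X → X) (M : Set X) : Set X := {x ∈ M | T x = x}

/-- Points of coincidence `PC(S,T)` of the pair `(S,T)` over the set `M`. -/
def PCset (S T : X → X) (M : Set X) : Set X := {w | ∃ x ∈ M, S x = w ∧ T x = w}

/-- `(S,T)` is a generalized JH-operator pair with order `n` on `M`:
there is `x ∈ M` and `w = Sx = Tx ∈ PC(S,T)` with `‖w - x‖ ≤ (δ(PC(S,T)))ⁿ`. -/
def GenJHOp (S T : X → X) (M : Set X) (n : ℕ) : Prop :=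
  ∃ x ∈ M, S x = T x ∧ ‖S x - x‖ ≤ Metric.diam (PCset S T M) ^ n

/-- `(S,T)` is a generalized JH-suboperator pair with order `n` on `M` (w.r.t. `q`):
for each `k ∈ [0,1]`, `(S, T_k)` with `T_k x = (1-k)q + kTx` is a generalized JH-operator
pair with order `n`. -/
def GenJHSubOp (S T : X → X) (M : Set X) (q : X) (n : ℕ) : Prop :=
  ∀ k ∈ Icc (0:ℝ) 1, GenJHOp S (fun x => (1 - k) • q + k • T x) M n

/-- `M` is `q`-starshaped. -/
def Starshaped (M : Set X) (q : X) : Prop :=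
  q ∈ M ∧ ∀ x ∈ M, segment ℝ q x ⊆ M

def m1 (S T : X → X) (x y : X) : ℝ :=
  max (max ‖S x - S y‖ ‖S x - T x‖)
    (max ‖S y - T y‖ ((‖T x - T y‖ + ‖S y - T x‖) / 2))

def n1 (S T : X → X) (x y : X) : ℝ :=
  max ‖S x - S y‖ (max ‖T x - S x‖ ‖S y - T y‖)

def m2 (S T : X → X) (x y : X) : ℝ :=
  max (max ‖S x - S y‖ ‖S x - T x‖)
    (max ‖S y - T y‖ ((‖S x - T y‖ + ‖S y - T x‖) / 2))

def m3 (S T : X → X) (q x y : X) : ℝ :=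
  max (max ‖S x - S y‖ (Metric.infDist (S x) (segment ℝ q (T x))))
    (max (Metric.infDist (S y) (segment ℝ q (T y)))
      ((Metric.infDist (S x) (segment ℝ q (T y)) +
        Metric.infDist (S y) (segment ℝ q (T x))) / 2))

/-- `Y^{a} = {f_a(k) : k ∈ [0,1]}` for a family `f`. -/
def Yfam (f : X → ℝ → X) (a : X) : Set X := f a '' Icc (0:ℝ) 1

def m4 (f : X → ℝ → X) (S T : X → X) (x y : X) : ℝ :=
  max (max ‖S x - S y‖ (Metric.infDist (S x) (Yfam f (T x))))
    (max (Metric.infDist (S y) (Yfam f (T y)))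
      ((Metric.infDist (S x) (Yfam f (T y)) +
        Metric.infDist (S y) (Yfam f (T x))) / 2))

/-- `ℑ = {f_α}_{α ∈ M}` is a family of functions `[0,1] → M` with `f_α(1) = α`. -/
def FamilyOn (f : X → ℝ → X) (M : Set X) : Prop :=
  (∀ a ∈ M, ∀ t ∈ Icc (0:ℝ) 1, f a t ∈ M) ∧ ∀ a ∈ M, f a 1 = a

/-- The family is contractive with contractiveness function `Φ : (0,1) → (0,1)`. -/
def ContractiveFamily (f : X → ℝ → X) (M : Set X) (Phi : ℝ → ℝ) : Prop :=
  (∀ t ∈ Ioo (0:ℝ) 1, Phi t ∈ Ioo (0:ℝ) 1) ∧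
  ∀ a ∈ M, ∀ b ∈ M, ∀ t ∈ Ioo (0:ℝ) 1, ‖f a t - f b t‖ ≤ Phi t * ‖a - b‖

/-- The family is jointly continuous: `tₙ → t₀` and `αₙ → α₀` imply
`f_{αₙ}(tₙ) → f_{α₀}(t₀)`. -/
def JointlyContinuousFamily (f : X → ℝ → X) (M : Set X) : Prop :=
  ∀ (tn : ℕ → ℝ) (t0 : ℝ), (∀ n, tn n ∈ Icc (0:ℝ) 1) → t0 ∈ Icc (0:ℝ) 1 →
    Tendsto tn atTop (𝓝 t0) →
    ∀ (an : ℕ → X) (a0 : X), (∀ n, an n ∈ M) → a0 ∈ M →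
      Tendsto an atTop (𝓝 a0) →
      Tendsto (fun n => f (an n) (tn n)) atTop (𝓝 (f a0 t0))

/-- `(S,T)` is a generalized JHℑ-suboperator pair with order `n` on `M`:
for each `k ∈ [0,1]`, `(S, T_k)` with `T_k x = f_{Tx}(k)` is a generalized
JH-operator pair with order `n`. -/
def GenJHImSubOp (f : X → ℝ → X) (S T : X → X) (M : Set X) (n : ℕ) : Prop :=
  ∀ k ∈ Icc (0:ℝ) 1, GenJHOp S (fun x => f (T x) k) M n

/-- Weak convergence of a sequence. -/
def WeakTendsTo (x : ℕ → X) (a : X) : Prop :=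
  ∀ f : StrongDual ℝ X, Tendsto (fun n => f (x n)) atTop (𝓝 (f a))

/-- Weak (sequential) closure. -/
def WSeqCl (A : Set X) : Set X := {a | ∃ x : ℕ → X, (∀ n, x n ∈ A) ∧ WeakTendsTo x a}

/-- Weak (sequential) compactness. -/
def WSeqCompact (A : Set X) : Prop :=
  ∀ x : ℕ → X, (∀ n, x n ∈ A) →
    ∃ a ∈ A, ∃ g : ℕ → ℕ, StrictMono g ∧ WeakTendsTo (x ∘ g) a

/-- `T` is completely continuous on `M`: weak convergence implies strong
convergence of images. -/
def CompletelyContinuousOn (T : X → X) (M : Set X) : Prop :=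
  ∀ (x : ℕ → X) (a : X), (∀ n, x n ∈ M) → a ∈ M → WeakTendsTo x a →
    Tendsto (fun n => T (x n)) atTop (𝓝 (T a))

/-- `S` is weakly continuous on `M`. -/
def WeaklyContinuousOn (S : X → X) (M : Set X) : Prop :=
  ∀ (x : ℕ → X) (a : X), (∀ n, x n ∈ M) → a ∈ M → WeakTendsTo x a →
    WeakTendsTo (fun n => S (x n)) (S a)

/-- `G` is demiclosed at `0` on `M`. -/
def DemiclosedAtZero (G : X → X) (M : Set X) : Prop :=
  ∀ (x : ℕ → X) (a : X), (∀ n, x n ∈ M) → a ∈ M → WeakTendsTo x a →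
    Tendsto (fun n => G (x n)) atTop (𝓝 (0 : X)) → G a = 0

/-- `T` is hemicompact on `M`. -/
def Hemicompact (T : X → X) (M : Set X) : Prop :=
  ∀ x : ℕ → X, (∀ n, x n ∈ M) →
    Tendsto (fun n => ‖x n - T (x n)‖) atTop (𝓝 (0 : ℝ)) →
    ∃ (a : X) (g : ℕ → ℕ), StrictMono g ∧ Tendsto (x ∘ g) atTop (𝓝 a)

/-- Opial's condition. -/
def OpialCondition (Y : Type*) [NormedAddCommGroup Y] [NormedSpace ℝ Y] : Prop :=
  ∀ (x : ℕ → Y) (a : Y), WeakTendsTo x a → ∀ y : Y, y ≠ a →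
    liminf (fun n => ‖x n - a‖) atTop < liminf (fun n => ‖x n - y‖) atTop

/-- `P_M(u)`, the set of best approximations to `u` out of `M`. -/
def PMset (M : Set X) (u : X) : Set X := {x ∈ M | ‖x - u‖ = Metric.infDist u M}

/-- `C_M^S(u) = {x ∈ M : Sx ∈ P_M(u)}`. -/
def CMSset (M : Set X) (S : X → X) (u : X) : Set X := {x ∈ M | S x ∈ PMset M u}


lemma intPhi_mono' {phi : ℝ → ℝ} (h : PhiAdmissible phi) {a b : ℝ}
    (ha : 0 ≤ a) (hab : a ≤ b) : intPhi phi a ≤ intPhi phi b := by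
  have hint : IntervalIntegrable phi volume a b := (h.2.1 a).symm.trans (h.2.1 b)
  have heq : intPhi phi b = intPhi phi a + ∫ t in a..b, phi t := by
    rw [intPhi, intPhi, intervalIntegral.integral_add_adjacent_intervals (h.2.1 a) hint]
  have hnn : 0 ≤ ∫ t in a..b, phi t :=
    intervalIntegral.integral_nonneg hab (fun t ht => h.1 t (ha.trans ht.1))
  linarith

lemma intPhi_nonneg' {phi : ℝ → ℝ} (h : PhiAdmissible phi) {a : ℝ} (ha : 0 ≤ a) :
    0 ≤ intPhi phi a := by
  have h0 : intPhi phi 0 = 0 := intervalIntegral.integral_same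
  have := intPhi_mono' h le_rfl ha
  linarith

lemma intPhi_eq_zero' {phi : ℝ → ℝ} (h : PhiAdmissible phi) {a : ℝ} (ha : 0 ≤ a)
    (h0 : intPhi phi a = 0) : a = 0 := by
  by_contra hne
  have hpos : 0 < a := lt_of_le_of_ne ha (Ne.symm hne)
  exact absurd h0 (ne_of_gt (h.2.2 a hpos))

lemma squeeze_eq_zero' {ψ φu : ℝ → ℝ} {F : ℝ → ℝ → ℝ}
    (hψ : AlteringDistance ψ) (hφu : UltraAltering φu) (hF : CClassFun F)
    (hmono : MonotoneTriple ψ φu F) {A B : ℝ} (hB : 0 ≤ B) (hBA : B ≤ A)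
    (h : ψ A ≤ F (ψ B) (φu B)) : A = 0 := by
  have hA : 0 ≤ A := hB.trans hBA
  have hψ0 : ψ 0 = 0 := (hψ.2.2 0 le_rfl).mpr rfl
  have hψA : 0 ≤ ψ A := by
    have := hψ.1 (Set.self_mem_Ici) (Set.mem_Ici.mpr hA) hA
    linarith
  have hφuA : 0 ≤ φu A := by
    have := hφu.2.1 (Set.self_mem_Ici) (Set.mem_Ici.mpr hA) hA
    linarith [hφu.2.2.2]
  have h1 : F (ψ B) (φu B) ≤ F (ψ A) (φu A) := hmono B A hB hBA
  have h2 : F (ψ A) (φu A) ≤ ψ A := hF.2.1 _ hψA _ hφuA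
  have heq : F (ψ A) (φu A) = ψ A := le_antisymm h2 (h.trans h1)
  rcases hF.2.2 _ hψA _ hφuA heq with h3 | h3
  · exact (hψ.2.2 A hA).mp h3
  · by_contra hne
    have hApos : 0 < A := lt_of_le_of_ne hA (Ne.symm hne)
    exact absurd h3 (ne_of_gt (hφu.2.2.1 A hApos))

lemma pm_mem_frontier' {X : Type*} [NormedAddCommGroup X] [NormedSpace ℝ X]
    {M : Set X} {u x : X} (hx : x ∈ PMset M u) (hne : x ≠ u) :
    x ∈ frontier M := by
  have hnotint : x ∉ interior M := by
    intro hint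
    obtain ⟨ε, hε, hball⟩ := Metric.isOpen_iff.mp isOpen_interior x hint
    have hdpos : 0 < ‖x - u‖ := norm_pos_iff.mpr (sub_ne_zero_of_ne hne)
    set d := ‖x - u‖ with hd
    set t := min (ε / (2 * d)) (1/2) with ht
    have ht0 : 0 < t := lt_min (by positivity) (by norm_num)
    have ht1 : t ≤ 1/2 := min_le_right _ _
    have htd : t * d < ε := by
      have h1 : t ≤ ε / (2 * d) := min_le_left _ _
      have h2 : t * d ≤ (ε / (2 * d)) * d := mul_le_mul_of_nonneg_right h1 hdpos.le
      have h3 : (ε / (2 * d)) * d = ε / 2 := by field_simp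
      linarith
    set z := x + t • (u - x) with hz
    have hzm : z ∈ M := by
      apply interior_subset
      apply hball
      rw [Metric.mem_ball, dist_eq_norm]
      have : z - x = t • (u - x) := by rw [hz]; abel
      rw [this, norm_smul, Real.norm_eq_abs, abs_of_pos ht0, norm_sub_rev]
      exact htd
    have hzu : ‖z - u‖ = (1 - t) * d := by
      have h1 : z - u = (1 - t) • (x - u) := by
        rw [hz]; module
      rw [h1, norm_smul, Real.norm_eq_abs, abs_of_pos (by linarith : (0:ℝ) < 1 - t)]
    have hle : Metric.infDist u M ≤ (1 - t) * d := by
      have := Metric.infDist_le_dist_of_mem (x := u) hzm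
      rwa [dist_eq_norm, norm_sub_rev, hzu] at this
    have heq : d = Metric.infDist u M := hx.2
    nlinarith
  exact ⟨subset_closure hx.1, hnotint⟩

theorem stmt_18 {X : Type*} [NormedAddCommGroup X] [NormedSpace ℝ X]
    (M : Set X) (S T : X → X) (u : X) (hSu : S u = u) (hTu : T u = u)
    (hTbd : T '' (frontier M ∩ M) ⊆ M)
    (hSPM : S '' PMset M u = PMset M u)
    (hPMcl : IsClosed (PMset M u))
    (f : X → ℝ → X) (Phi : ℝ → ℝ)
    (hfam : FamilyOn f (PMset M u)) (hcf : ContractiveFamily f (PMset M u) Phi)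
    (hjc : JointlyContinuousFamily f (PMset M u))
    (phi ψ φu : ℝ → ℝ) (F : ℝ → ℝ → ℝ)
    (hphi : PhiAdmissible phi) (hψ : AlteringDistance ψ) (hφu : UltraAltering φu)
    (hF : CClassFun F) (hmono : MonotoneTriple ψ φu F)
    (γ : ℝ → ℝ) (hγ : GammaAdmissible γ)
    (n₀ : ℕ) (hn₀ : 1 ≤ n₀) (hJH : GenJHImSubOp f S T (PMset M u) n₀)
    (hcontr : ∀ x ∈ PMset M u ∪ {u}, ∀ y ∈ PMset M u ∪ {u},
      (y = u →
        ψ (intPhi phi ‖T x - T y‖) ≤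
          F (ψ (intPhi phi ‖S x - S y‖)) (φu (intPhi phi ‖S x - S y‖))) ∧
      (y ∈ PMset M u → ∀ t ∈ Ioo (0:ℝ) 1,
        ψ (intPhi phi ‖T x - T y‖) ≤
          F (ψ (intPhi phi ((1 / Phi t) * γ (m4 f S T x y))))
            (φu (intPhi phi ((1 / Phi t) * γ (m4 f S T x y))))))
    (hcmp : IsCompact (closure (T '' PMset M u)))
    (hScont : ContinuousOn S (PMset M u)) (hTcont : ContinuousOn T (PMset M u)) :
    MapsTo T (PMset M u) (PMset M u) ∧ ∃ x ∈ PMset M u, S x = x ∧ T x = x := by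
  have hSmem : ∀ x ∈ PMset M u, S x ∈ PMset M u :=
    fun x hx => hSPM ▸ Set.mem_image_of_mem S hx
  -- Part 1: T-invariance
  have hmaps : MapsTo T (PMset M u) (PMset M u) := by
    intro x hx
    by_cases hxu : x = u
    · subst hxu; rw [hTu]; exact hx
    · have hxf : x ∈ frontier M := pm_mem_frontier' hx hxu
      have hTxM : T x ∈ M := hTbd ⟨x, ⟨hxf, hx.1⟩, rfl⟩
      have hSx := hSmem x hx
      have hle : ‖T x - u‖ ≤ ‖S x - u‖ := by
        by_contra hlt
        push_neg at hlt
        have hc := (hcontr x (Or.inl hx) u (Or.inr rfl)).1 rfl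
        rw [hTu, hSu] at hc
        have hA0 : intPhi phi ‖T x - u‖ = 0 :=
          squeeze_eq_zero' hψ hφu hF hmono (intPhi_nonneg' hphi (norm_nonneg _))
            (intPhi_mono' hphi (norm_nonneg _) hlt.le) hc
        have h0 : ‖T x - u‖ = 0 := intPhi_eq_zero' hphi (norm_nonneg _) hA0
        have := norm_nonneg (S x - u)
        linarith
      refine ⟨hTxM, le_antisymm (hle.trans (le_of_eq hSx.2)) ?_⟩
      have := Metric.infDist_le_dist_of_mem (x := u) hTxM
      rwa [dist_eq_norm, norm_sub_rev] at this
  -- Part 2: uniqueness of coincidence points for each k ∈ (0,1)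
  have huniq : ∀ k ∈ Ioo (0:ℝ) 1,
      (PCset S (fun x => f (T x) k) (PMset M u)).Subsingleton := by
    rintro k hk w1 ⟨x, hx, hSx, hfx⟩ w2 ⟨y, hy, hSy, hfy⟩
    simp only at hSx hfx hSy hfy
    by_contra hne
    have hr : 0 < ‖w1 - w2‖ := norm_pos_iff.mpr (sub_ne_zero_of_ne hne)
    have hTx := hmaps hx
    have hTy := hmaps hy
    have hPhi := hcf.1 k hk
    have hkIcc : k ∈ Icc (0:ℝ) 1 := ⟨hk.1.le, hk.2.le⟩
    have hcontract : ‖w1 - w2‖ ≤ Phi k * ‖T x - T y‖ := by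
      have h2 := hcf.2 (T x) hTx (T y) hTy k hk
      rwa [hfx, hfy] at h2
    have hTTpos : 0 < ‖T x - T y‖ := by
      by_contra h
      push_neg at h
      have h0 : ‖T x - T y‖ = 0 := le_antisymm h (norm_nonneg _)
      rw [h0, mul_zero] at hcontract
      linarith
    have hw1mem : S x ∈ Yfam f (T x) := by rw [hSx, ← hfx]; exact ⟨k, hkIcc, rfl⟩
    have hw2mem : S y ∈ Yfam f (T y) := by rw [hSy, ← hfy]; exact ⟨k, hkIcc, rfl⟩
    have hm4 : m4 f S T x y = ‖w1 - w2‖ := by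
      have hd1 : Metric.infDist (S x) (Yfam f (T x)) = 0 :=
        Metric.infDist_zero_of_mem hw1mem
      have hd2 : Metric.infDist (S y) (Yfam f (T y)) = 0 :=
        Metric.infDist_zero_of_mem hw2mem
      have hd3 : Metric.infDist (S x) (Yfam f (T y)) ≤ ‖w1 - w2‖ := by
        have h := Metric.infDist_le_dist_of_mem (x := S x) hw2mem
        rw [dist_eq_norm] at h
        calc Metric.infDist (S x) (Yfam f (T y)) ≤ ‖S x - S y‖ := h
          _ = ‖w1 - w2‖ := by rw [hSx, hSy]
      have hd4 : Metric.infDist (S y) (Yfam f (T x)) ≤ ‖w1 - w2‖ := by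
        have h := Metric.infDist_le_dist_of_mem (x := S y) hw1mem
        rw [dist_eq_norm] at h
        calc Metric.infDist (S y) (Yfam f (T x)) ≤ ‖S y - S x‖ := h
          _ = ‖w1 - w2‖ := by rw [hSx, hSy, norm_sub_rev]
      have hxy : ‖S x - S y‖ = ‖w1 - w2‖ := by rw [hSx, hSy]
      have hd3n : 0 ≤ Metric.infDist (S x) (Yfam f (T y)) := Metric.infDist_nonneg
      have hd4n : 0 ≤ Metric.infDist (S y) (Yfam f (T x)) := Metric.infDist_nonneg
      rw [m4, hd1, hd2, hxy]
      refine le_antisymm ?_ ?_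
      · exact max_le (max_le le_rfl hr.le) (max_le hr.le (by linarith))
      · exact (le_max_left _ _).trans (le_max_left _ _)
    have hγpos : 0 < γ ‖w1 - w2‖ := hγ.1 _ hr
    have hγlt : γ ‖w1 - w2‖ < ‖w1 - w2‖ := hγ.2.2 _ hr
    have hbpos : 0 < (1 / Phi k) * γ ‖w1 - w2‖ :=
      mul_pos (div_pos one_pos hPhi.1) hγpos
    have hb : (1 / Phi k) * γ ‖w1 - w2‖ ≤ ‖T x - T y‖ := by
      rw [one_div, inv_mul_eq_div, div_le_iff₀ hPhi.1]
      calc γ ‖w1 - w2‖ ≤ ‖w1 - w2‖ := hγlt.le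
        _ ≤ Phi k * ‖T x - T y‖ := hcontract
        _ = ‖T x - T y‖ * Phi k := by ring
    have hc := (hcontr x (Or.inl hx) y (Or.inl hy)).2 hy k hk
    rw [hm4] at hc
    have hA0 : intPhi phi ‖T x - T y‖ = 0 :=
      squeeze_eq_zero' hψ hφu hF hmono (intPhi_nonneg' hphi hbpos.le)
        (intPhi_mono' hphi hbpos.le hb) hc
    exact absurd (intPhi_eq_zero' hphi (norm_nonneg _) hA0) (ne_of_gt hTTpos)
  -- Fixed points of S that are "k-fixed" for f ∘ T
  have hfixk : ∀ k ∈ Ioo (0:ℝ) 1, ∃ x ∈ PMset M u, S x = x ∧ f (T x) k = x := by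
    intro k hk
    obtain ⟨x, hx, hSx, hbd⟩ := hJH k ⟨hk.1.le, hk.2.le⟩
    simp only at hSx hbd
    have hdiam : Metric.diam (PCset S (fun x => f (T x) k) (PMset M u)) = 0 :=
      Metric.diam_subsingleton (huniq k hk)
    rw [hdiam, zero_pow (by omega : n₀ ≠ 0)] at hbd
    have hSxx : S x = x := by
      have h1 : ‖S x - x‖ = 0 := le_antisymm hbd (norm_nonneg _)
      rwa [norm_eq_zero, sub_eq_zero] at h1
    exact ⟨x, hx, hSxx, hSx.symm.trans hSxx⟩
  -- the sequence kₙ → 1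
  have hkseq : ∀ n : ℕ, (1 - 1/((n:ℝ)+2)) ∈ Ioo (0:ℝ) 1 := by
    intro n
    have h2 : (0:ℝ) < (n:ℝ) + 2 := by positivity
    have h3 : 1/((n:ℝ)+2) < 1 := by
      rw [div_lt_one h2]
      have := Nat.cast_nonneg (α := ℝ) n
      linarith
    have h4 : 0 < 1/((n:ℝ)+2) := by positivity
    exact ⟨by linarith, by linarith⟩
  choose xs hxsPM hxsS hxsf using fun n : ℕ => hfixk _ (hkseq n)
  have hmem : ∀ n, T (xs n) ∈ closure (T '' PMset M u) :=
    fun n => subset_closure (Set.mem_image_of_mem T (hxsPM n))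
  obtain ⟨y, hy, g, hg, htend⟩ := hcmp.tendsto_subseq hmem
  have hyPM : y ∈ PMset M u := closure_minimal hmaps.image_subset hPMcl hy
  have hK : Tendsto (fun n : ℕ => 1 - 1/((n:ℝ)+2)) atTop (𝓝 1) := by
    have h1 : Tendsto (fun n : ℕ => ((n:ℝ)+2)) atTop atTop :=
      tendsto_atTop_add_const_right atTop 2 tendsto_natCast_atTop_atTop
    have h2 : Tendsto (fun n : ℕ => 1/((n:ℝ)+2)) atTop (𝓝 0) := by
      simpa [one_div, Pi.inv_def] using h1.inv_tendsto_atTop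
    have h3 := Tendsto.const_sub (1:ℝ) h2
    simpa using h3
  have hKg : Tendsto (fun n : ℕ => 1 - 1/(((g n):ℝ)+2)) atTop (𝓝 1) :=
    hK.comp hg.tendsto_atTop
  have htend' : Tendsto (fun n => T (xs (g n))) atTop (𝓝 y) := htend
  have hfc := hjc (fun n => 1 - 1/(((g n):ℝ)+2)) 1
    (fun n => Ioo_subset_Icc_self (hkseq (g n))) (by norm_num) hKg
    (fun n => T (xs (g n))) y (fun n => hmaps (hxsPM (g n))) hyPM htend'
  have hxg : Tendsto (fun n => xs (g n)) atTop (𝓝 y) := by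
    have h2 : (fun n => f (T (xs (g n))) (1 - 1/(((g n):ℝ)+2))) = fun n => xs (g n) :=
      funext fun n => hxsf (g n)
    rw [h2, hfam.2 y hyPM] at hfc
    exact hfc
  have hxgW : Tendsto (fun n => xs (g n)) atTop (𝓝[PMset M u] y) :=
    tendsto_nhdsWithin_of_tendsto_nhds_of_eventually_within _ hxg
      (Filter.Eventually.of_forall fun n => hxsPM (g n))
  have hTy : T y = y := by
    have h1 : Tendsto (fun n => T (xs (g n))) atTop (𝓝 (T y)) :=
      (hTcont y hyPM).tendsto.comp hxgW
    exact tendsto_nhds_unique h1 htend'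
  have hSy : S y = y := by
    have h1 : Tendsto (fun n => S (xs (g n))) atTop (𝓝 (S y)) :=
      (hScont y hyPM).tendsto.comp hxgW
    have h2 : (fun n => S (xs (g n))) = fun n => xs (g n) := funext fun n => hxsS (g n)
    rw [h2] at h1
    exact tendsto_nhds_unique h1 hxg
  exact ⟨hmaps, y, hyPM, hSy, hTy⟩

end
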